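/- Suppose L is a Lie algebra that is also an A-module over a commutative unital algebra A, L acts on A by derivations, and the adjoint representation satisfies the compatibility [y, fx] = y(f)x + f[y,x] for f ∈ A, x, y ∈ L. Let M be an L-module and for x ∈ L, u ∈ M define ψ(x,u) ∈ Hom(A,M) by ψ(x,u)(f) = (fx)·u. Then under the coinduced actions on Hom(A,M), one has y·ψ(x,u) = ψ([y,x], u) + ψ(x, y·u) and g·ψ(x,u) = ψ(gx, u) for all x, y ∈ L, u ∈ M, g ∈ A. -/

import Mathlib

variable {K : Type*} [Field K] {L : Type*} [LieRing L] [LieAlgebra K L]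
  {A : Type*} [CommRing A] [Algebra K A] [Module A L]
  {M : Type*} [AddCommGroup M] [Module K M] [LieRingModule L M] [LieModule K L M]

attribute [local instance 100] LieRing.ofAssociativeRing

/-- The coinduced action of `L` on `Hom(A, M)`: `(x·φ)(f) = x·(φ f) - φ(x·f)`. -/
def coind (D : L →ₗ⁅K⁆ Module.End K A) (x : L) (φ : A → M) : A → M :=
  fun f => ⁅x, φ f⁆ - φ (D x f)

/-- The action of `A` on `Hom(A, M)`: `(g·φ)(f) = φ(g f)`. -/
def actA (g : A) (φ : A → M) : A → M := fun f => φ (g * f)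

/-- The generators of the `A`-cover: `ψ(x,u)(f) = (f x)·u`. -/
def psi (x : L) (u : M) : A → M := fun f => ⁅f • x, u⁆

/-- The action of `L` and `A` on the generators `ψ(x,u)` of the `A`-cover:
`y·ψ(x,u) = ψ([y,x],u) + ψ(x, y·u)` and `g·ψ(x,u) = ψ(g x, u)`. -/
theorem cover_action_formulas (D : L →ₗ⁅K⁆ Module.End K A)
    (hder : ∀ (x : L) (a b : A), D x (a * b) = a * D x b + D x a * b)
    (hcompat : ∀ (y : L) (f : A) (x : L), ⁅y, f • x⁆ = D y f • x + f • ⁅y, x⁆)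
    (x y : L) (u : M) (g : A) :
    (∀ f : A, coind D y (psi x u) f = psi ⁅y, x⁆ u f + psi x ⁅y, u⁆ f) ∧
      (∀ f : A, actA g (psi x u) f = psi (g • x) u f) := by
  constructor
  · intro f
    simp only [coind, psi]
    rw [leibniz_lie y (f • x) u, hcompat y f x, add_lie]
    abel
  · intro f
    simp only [actA, psi, mul_comm g f, mul_smul]
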